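/- For the three-dimensional Suslov problem with J = diag(J_1, J_2, J_3), constraint Ω_3 = 0, and potential V(Γ) = v_1(Γ_1, Γ_2²+Γ_3²) + v_2(Γ_2, Γ_1²+Γ_3²), the function F = (1/2)(J_1²Ω_1² + J_2²Ω_2²) + J_2 v_1(Γ_1, Γ_2²+Γ_3²) + J_1 v_2(Γ_2, Γ_1²+Γ_3²) is a first integral. -/

import Mathlib

/-- For the 3D Suslov problem with `J = diag(J_1,J_2,J_3)`, constraint `Ω_3 = 0`,
and potential `V(Γ) = v_1(Γ_1, Γ_2²+Γ_3²) + v_2(Γ_2, Γ_1²+Γ_3²)`, the function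
`F = ½(J_1²Ω_1² + J_2²Ω_2²) + J_2 v_1(Γ_1,Γ_2²+Γ_3²) + J_1 v_2(Γ_2,Γ_1²+Γ_3²)`
is a first integral. -/
theorem suslov_3d_general_potential_integral
    (J1 J2 J3 : ℝ) (hJ1 : 0 < J1) (hJ2 : 0 < J2) (hJ3 : 0 < J3)
    (v1 v2 : ℝ × ℝ → ℝ) (hv1 : Differentiable ℝ v1) (hv2 : Differentiable ℝ v2)
    (Ω1 Ω2 Γ1 Γ2 Γ3 : ℝ → ℝ)
    -- gradient of `V(Γ) = v_1(Γ_1, Γ_2²+Γ_3²) + v_2(Γ_2, Γ_1²+Γ_3²)`: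
    (g1 g2 g3 : ℝ → ℝ)
    (hg1 : ∀ t, g1 t = fderiv ℝ v1 (Γ1 t, (Γ2 t) ^ 2 + (Γ3 t) ^ 2) (1, 0)
      + fderiv ℝ v2 (Γ2 t, (Γ1 t) ^ 2 + (Γ3 t) ^ 2) (0, 1) * (2 * Γ1 t))
    (hg2 : ∀ t, g2 t = fderiv ℝ v1 (Γ1 t, (Γ2 t) ^ 2 + (Γ3 t) ^ 2) (0, 1) * (2 * Γ2 t)
      + fderiv ℝ v2 (Γ2 t, (Γ1 t) ^ 2 + (Γ3 t) ^ 2) (1, 0))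
    (hg3 : ∀ t, g3 t = (fderiv ℝ v1 (Γ1 t, (Γ2 t) ^ 2 + (Γ3 t) ^ 2) (0, 1)
      + fderiv ℝ v2 (Γ2 t, (Γ1 t) ^ 2 + (Γ3 t) ^ 2) (0, 1)) * (2 * Γ3 t))
    -- the Suslov equations with constraint `Ω_3 = 0`:
    (hΩ1 : ∀ t, HasDerivAt Ω1 ((Γ2 t * g3 t - Γ3 t * g2 t) / J1) t)
    (hΩ2 : ∀ t, HasDerivAt Ω2 ((Γ3 t * g1 t - Γ1 t * g3 t) / J2) t)
    (hΓ1 : ∀ t, HasDerivAt Γ1 (-(Γ3 t * Ω2 t)) t)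
    (hΓ2 : ∀ t, HasDerivAt Γ2 (Γ3 t * Ω1 t) t)
    (hΓ3 : ∀ t, HasDerivAt Γ3 (Γ1 t * Ω2 t - Γ2 t * Ω1 t) t) :
    ∀ t, (1 / 2) * (J1 ^ 2 * (Ω1 t) ^ 2 + J2 ^ 2 * (Ω2 t) ^ 2)
        + J2 * v1 (Γ1 t, (Γ2 t) ^ 2 + (Γ3 t) ^ 2)
        + J1 * v2 (Γ2 t, (Γ1 t) ^ 2 + (Γ3 t) ^ 2)
      = (1 / 2) * (J1 ^ 2 * (Ω1 0) ^ 2 + J2 ^ 2 * (Ω2 0) ^ 2)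
        + J2 * v1 (Γ1 0, (Γ2 0) ^ 2 + (Γ3 0) ^ 2)
        + J1 * v2 (Γ2 0, (Γ1 0) ^ 2 + (Γ3 0) ^ 2) := by
  set F : ℝ → ℝ := fun t =>
    (1 / 2) * (J1 ^ 2 * (Ω1 t) ^ 2 + J2 ^ 2 * (Ω2 t) ^ 2)
      + J2 * v1 (Γ1 t, (Γ2 t) ^ 2 + (Γ3 t) ^ 2)
      + J1 * v2 (Γ2 t, (Γ1 t) ^ 2 + (Γ3 t) ^ 2) with hF
  have key : ∀ t, HasDerivAt F 0 t := by
    intro t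
    set a1 := fderiv ℝ v1 (Γ1 t, (Γ2 t) ^ 2 + (Γ3 t) ^ 2) (1, 0) with ha1
    set b1 := fderiv ℝ v1 (Γ1 t, (Γ2 t) ^ 2 + (Γ3 t) ^ 2) (0, 1) with hb1
    set a2 := fderiv ℝ v2 (Γ2 t, (Γ1 t) ^ 2 + (Γ3 t) ^ 2) (1, 0) with ha2
    set b2 := fderiv ℝ v2 (Γ2 t, (Γ1 t) ^ 2 + (Γ3 t) ^ 2) (0, 1) with hb2
    -- derivative of the second coordinates
    have hs1 : HasDerivAt (fun t => (Γ2 t) ^ 2 + (Γ3 t) ^ 2)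
        (2 * Γ2 t * (Γ3 t * Ω1 t) + 2 * Γ3 t * (Γ1 t * Ω2 t - Γ2 t * Ω1 t)) t := by
      have := (((hΓ2 t).pow 2).add ((hΓ3 t).pow 2))
      exact this.congr_deriv (by ring)
    have hs2 : HasDerivAt (fun t => (Γ1 t) ^ 2 + (Γ3 t) ^ 2)
        (2 * Γ1 t * (-(Γ3 t * Ω2 t)) + 2 * Γ3 t * (Γ1 t * Ω2 t - Γ2 t * Ω1 t)) t := by
      have := (((hΓ1 t).pow 2).add ((hΓ3 t).pow 2))
      exact this.congr_deriv (by ring)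
    -- curves into ℝ²
    have hp1 : HasDerivAt (fun t => (Γ1 t, (Γ2 t) ^ 2 + (Γ3 t) ^ 2))
        ((-(Γ3 t * Ω2 t), 2 * Γ2 t * (Γ3 t * Ω1 t) + 2 * Γ3 t * (Γ1 t * Ω2 t - Γ2 t * Ω1 t)) : ℝ × ℝ) t :=
      (hΓ1 t).prodMk hs1
    have hp2 : HasDerivAt (fun t => (Γ2 t, (Γ1 t) ^ 2 + (Γ3 t) ^ 2))
        ((Γ3 t * Ω1 t, 2 * Γ1 t * (-(Γ3 t * Ω2 t)) + 2 * Γ3 t * (Γ1 t * Ω2 t - Γ2 t * Ω1 t)) : ℝ × ℝ) t :=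
      (hΓ2 t).prodMk hs2
    have hc1 : HasDerivAt (fun t => v1 (Γ1 t, (Γ2 t) ^ 2 + (Γ3 t) ^ 2))
        (-(Γ3 t * Ω2 t) * a1
          + (2 * Γ2 t * (Γ3 t * Ω1 t) + 2 * Γ3 t * (Γ1 t * Ω2 t - Γ2 t * Ω1 t)) * b1) t := by
      have h := (hv1.differentiableAt.hasFDerivAt
        (x := (Γ1 t, (Γ2 t) ^ 2 + (Γ3 t) ^ 2))).comp_hasDerivAt t hp1
      refine h.congr_deriv ?_
      have hdecomp : ((-(Γ3 t * Ω2 t),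
          2 * Γ2 t * (Γ3 t * Ω1 t) + 2 * Γ3 t * (Γ1 t * Ω2 t - Γ2 t * Ω1 t)) : ℝ × ℝ)
          = (-(Γ3 t * Ω2 t)) • ((1 : ℝ), (0 : ℝ))
            + (2 * Γ2 t * (Γ3 t * Ω1 t) + 2 * Γ3 t * (Γ1 t * Ω2 t - Γ2 t * Ω1 t)) • ((0 : ℝ), (1 : ℝ)) := by
        simp [Prod.ext_iff]
      rw [hdecomp, map_add, map_smul, map_smul, smul_eq_mul, smul_eq_mul, ← ha1, ← hb1]
    have hc2 : HasDerivAt (fun t => v2 (Γ2 t, (Γ1 t) ^ 2 + (Γ3 t) ^ 2))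
        (Γ3 t * Ω1 t * a2
          + (2 * Γ1 t * (-(Γ3 t * Ω2 t)) + 2 * Γ3 t * (Γ1 t * Ω2 t - Γ2 t * Ω1 t)) * b2) t := by
      have h := (hv2.differentiableAt.hasFDerivAt
        (x := (Γ2 t, (Γ1 t) ^ 2 + (Γ3 t) ^ 2))).comp_hasDerivAt t hp2
      refine h.congr_deriv ?_
      have hdecomp : ((Γ3 t * Ω1 t,
          2 * Γ1 t * (-(Γ3 t * Ω2 t)) + 2 * Γ3 t * (Γ1 t * Ω2 t - Γ2 t * Ω1 t)) : ℝ × ℝ)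
          = (Γ3 t * Ω1 t) • ((1 : ℝ), (0 : ℝ))
            + (2 * Γ1 t * (-(Γ3 t * Ω2 t)) + 2 * Γ3 t * (Γ1 t * Ω2 t - Γ2 t * Ω1 t)) • ((0 : ℝ), (1 : ℝ)) := by
        simp [Prod.ext_iff]
      rw [hdecomp, map_add, map_smul, map_smul, smul_eq_mul, smul_eq_mul, ← ha2, ← hb2]
    -- kinetic part
    have hk : HasDerivAt (fun t => (1 / 2) * (J1 ^ 2 * (Ω1 t) ^ 2 + J2 ^ 2 * (Ω2 t) ^ 2))
        ((1 / 2) * (J1 ^ 2 * (2 * Ω1 t * ((Γ2 t * g3 t - Γ3 t * g2 t) / J1))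
          + J2 ^ 2 * (2 * Ω2 t * ((Γ3 t * g1 t - Γ1 t * g3 t) / J2)))) t := by
      have := (((hΩ1 t).pow 2).const_mul (J1 ^ 2)).add
        (((hΩ2 t).pow 2).const_mul (J2 ^ 2)) |>.const_mul (1 / 2)
      exact this.congr_deriv (by ring)
    have hFd := (hk.add (hc1.const_mul J2)).add (hc2.const_mul J1)
    have hzero : (1 / 2) * (J1 ^ 2 * (2 * Ω1 t * ((Γ2 t * g3 t - Γ3 t * g2 t) / J1))
          + J2 ^ 2 * (2 * Ω2 t * ((Γ3 t * g1 t - Γ1 t * g3 t) / J2)))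
        + J2 * (-(Γ3 t * Ω2 t) * a1
          + (2 * Γ2 t * (Γ3 t * Ω1 t) + 2 * Γ3 t * (Γ1 t * Ω2 t - Γ2 t * Ω1 t)) * b1)
        + J1 * (Γ3 t * Ω1 t * a2
          + (2 * Γ1 t * (-(Γ3 t * Ω2 t)) + 2 * Γ3 t * (Γ1 t * Ω2 t - Γ2 t * Ω1 t)) * b2) = 0 := by
      rw [hg1 t, hg2 t, hg3 t, ← ha1, ← hb1, ← ha2, ← hb2]
      field_simp
      ring
    rw [hF]
    exact hzero ▸ hFd
  have hdiff : Differentiable ℝ F := fun t => (key t).differentiableAt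
  have hderiv : ∀ t, deriv F t = 0 := fun t => (key t).deriv
  intro t
  have := is_const_of_deriv_eq_zero hdiff hderiv t 0
  simpa [hF] using this
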